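/- Let G be a connected finite simple graph with a cut vertex v, let H_1, …, H_k (k ≥ 2) be the connected components of G − v, and for each i ∈ {1,…,k} let G_i be the subgraph of G induced by V(H_i) ∪ {v}. Then each G_i is connected and y_G = (Σ_{i=1}^{k} y_{G_i}) − k + 1. (Equivalently: if G is obtained from vertex-disjoint connected graphs G_1, …, G_k by identifying one chosen vertex v_i of each G_i into a single vertex, then y_G = Σ_{i=1}^{k} y_{G_i} − k + 1.) -/

import Mathlib

open SimpleGraph

/-- The number of connected components of a graph. -/
noncomputable def numComp {V : Type*} (G : SimpleGraph V) : ℕ :=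
  Nat.card G.ConnectedComponent

/-- `y_G(A) = 2 c(G - A) - |A| - 1`. -/
noncomputable def yVal {V : Type*} (G : SimpleGraph V) (A : Set (Sym2 V)) : ℤ :=
  2 * (numComp (G.deleteEdges A) : ℤ) - (A.ncard : ℤ) - 1

/-- `y_G = max_{A ⊆ E(G)} y_G(A)`. -/
noncomputable def yMax {V : Type*} (G : SimpleGraph V) : ℤ :=
  sSup { y : ℤ | ∃ A ⊆ G.edgeSet, yVal G A = y }

namespace YAuxProof

variable {V : Type*} {G : SimpleGraph V} {v : V}

/-- The vertex set of the piece `G_c`. -/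
abbrev pS (G : SimpleGraph V) (v : V)
    (c : (G.induce ({v}ᶜ : Set V)).ConnectedComponent) : Set V :=
  (Subtype.val '' c.supp) ∪ {v}

lemma v_mem_pS (c : (G.induce ({v}ᶜ : Set V)).ConnectedComponent) : v ∈ pS G v c :=
  Or.inr rfl

lemma mem_pS_of_ne {u : V} (hu : u ≠ v) (c : (G.induce ({v}ᶜ : Set V)).ConnectedComponent)
    (h : (G.induce ({v}ᶜ : Set V)).connectedComponentMk ⟨u, by simp [hu]⟩ = c) :
    u ∈ pS G v c :=
  Or.inl ⟨⟨u, by simp [hu]⟩, h, rfl⟩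

lemma eq_comp_of_mem_pS {u : V} (hu : u ≠ v) {c : (G.induce ({v}ᶜ : Set V)).ConnectedComponent}
    (h : u ∈ pS G v c) :
    (G.induce ({v}ᶜ : Set V)).connectedComponentMk ⟨u, by simp [hu]⟩ = c := by
  rcases h with ⟨⟨x, hx⟩, hx1, hx2⟩ | h
  · cases hx2
    exact hx1
  · exact absurd h hu

/-- A walk avoiding `v` yields reachability in the induced graph on `{v}ᶜ`. -/
lemma reach_induce_of_walk {A : Set (Sym2 V)} {a b : V}
    (p : (G.deleteEdges A).Walk a b) (hv : v ∉ p.support) :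
    ∃ (ha : a ∈ ({v}ᶜ : Set V)) (hb : b ∈ ({v}ᶜ : Set V)),
      (G.induce ({v}ᶜ : Set V)).Reachable ⟨a, ha⟩ ⟨b, hb⟩ := by
  induction p with
  | @nil u =>
    have ha : u ∈ ({v}ᶜ : Set V) := by
      simp only [Walk.support_nil, List.mem_singleton] at hv
      simpa using fun h => hv h.symm
    exact ⟨ha, ha, Reachable.refl _⟩
  | @cons a x b hadj q ih =>
    have hsup : v ∉ q.support := fun h => hv (Walk.support_cons _ _ ▸ List.mem_cons_of_mem _ h)
    obtain ⟨hx, hb, hr⟩ := ih hsup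
    have ha : a ∈ ({v}ᶜ : Set V) := by
      simp only [Walk.support_cons, List.mem_cons] at hv
      simpa using fun h => hv (Or.inl h.symm)
    have : (G.induce ({v}ᶜ : Set V)).Adj ⟨a, ha⟩ ⟨x, hx⟩ := by
      simpa using ((SimpleGraph.deleteEdges_adj).mp hadj).1
    exact ⟨ha, hb, this.reachable.trans hr⟩

lemma exists_mk {W : Type*} {H : SimpleGraph W} (C : H.ConnectedComponent) :
    ∃ x, H.connectedComponentMk x = C := C.exists_rep

/-- The piece of an edge set living in `G_c`. -/
abbrev pA (G : SimpleGraph V) (v : V) (c : (G.induce ({v}ᶜ : Set V)).ConnectedComponent)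
    (A : Set (Sym2 V)) : Set (Sym2 (pS G v c)) :=
  Sym2.map Subtype.val ⁻¹' A

/-- The inclusion homomorphism. -/
def incl (G : SimpleGraph V) (v : V) (c : (G.induce ({v}ᶜ : Set V)).ConnectedComponent)
    (A : Set (Sym2 V)) :
    (G.induce (pS G v c)).deleteEdges (pA G v c A) →g G.deleteEdges A where
  toFun := Subtype.val
  map_rel' := by
    intro a b hab
    rw [deleteEdges_adj] at hab ⊢
    exact ⟨hab.1, by simpa [pA, Sym2.map_pair_eq] using hab.2⟩

lemma reach_down {A : Set (Sym2 V)} {c : (G.induce ({v}ᶜ : Set V)).ConnectedComponent}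
    {x y : pS G v c}
    (h : ((G.induce (pS G v c)).deleteEdges (pA G v c A)).Reachable x y) :
    (G.deleteEdges A).Reachable ↑x ↑y :=
  h.map (incl G v c A)

lemma reach_up {A : Set (Sym2 V)} {c : (G.induce ({v}ᶜ : Set V)).ConnectedComponent} :
    ∀ (n : ℕ) {u w : V} (p : (G.deleteEdges A).Walk u w), p.length ≤ n →
    ∀ (hu : u ∈ pS G v c) (hw : w ∈ pS G v c),
      ((G.induce (pS G v c)).deleteEdges (pA G v c A)).Reachable ⟨u, hu⟩ ⟨w, hw⟩ := by
  classical
  intro n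
  induction n with
  | zero =>
    intro u w p hp hu hw
    cases p with
    | nil => exact Reachable.refl _
    | cons h q => simp [Walk.length_cons] at hp
  | succ n ih =>
    intro u w p hp hu hw
    cases p with
    | nil => exact Reachable.refl _
    | @cons _ x _ hadj q =>
      rw [Walk.length_cons, Nat.succ_le_succ_iff] at hp
      by_cases hx : x ∈ pS G v c
      · have step : ((G.induce (pS G v c)).deleteEdges (pA G v c A)).Adj ⟨u, hu⟩ ⟨x, hx⟩ := by
          rw [deleteEdges_adj] at hadj ⊢
          exact ⟨hadj.1, by simpa [pA, Sym2.map_pair_eq] using hadj.2⟩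
        exact step.reachable.trans (ih q hp hx hw)
      · have hGadj : G.Adj u x := (deleteEdges_adj.mp hadj).1
        have huv : u = v := by
          by_contra huv
          have hxv : x ≠ v := fun h => hx (h ▸ v_mem_pS c)
          have hadj' : (G.induce ({v}ᶜ : Set V)).Adj ⟨u, by simp [huv]⟩ ⟨x, by simp [hxv]⟩ := by
            simpa using hGadj
          have hcomp := eq_comp_of_mem_pS huv hu
          exact hx (mem_pS_of_ne hxv c
            (by rw [← hcomp]; exact ConnectedComponent.sound hadj'.symm.reachable))
        have hvsup : v ∈ q.support := by
          by_contra hns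
          obtain ⟨hx', hw', hr⟩ := reach_induce_of_walk q hns
          have hwv : w ≠ v := by simpa using hw'
          have hcw := eq_comp_of_mem_pS hwv hw
          exact hx (mem_pS_of_ne (by simpa using hx') c
            (by rw [← hcw]; exact ConnectedComponent.sound hr))
        have hst : (⟨u, hu⟩ : pS G v c) = ⟨v, v_mem_pS c⟩ := Subtype.ext huv
        rw [hst]
        exact ih (q.dropUntil v hvsup)
          (le_trans (Walk.length_dropUntil_le q hvsup) hp) (v_mem_pS c) hw

lemma reach_iff {A : Set (Sym2 V)} {c : (G.induce ({v}ᶜ : Set V)).ConnectedComponent}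
    {u w : V} (hu : u ∈ pS G v c) (hw : w ∈ pS G v c) :
    (G.deleteEdges A).Reachable u w ↔
      ((G.induce (pS G v c)).deleteEdges (pA G v c A)).Reachable ⟨u, hu⟩ ⟨w, hw⟩ :=
  ⟨fun h => h.elim fun p => reach_up p.length p le_rfl hu hw, fun h => reach_down h⟩

lemma pS_connected (hG : G.Connected) (c : (G.induce ({v}ᶜ : Set V)).ConnectedComponent) :
    (G.induce (pS G v c)).Connected := by
  rw [connected_iff]
  refine ⟨fun x y => ?_, ⟨⟨v, v_mem_pS c⟩⟩⟩
  have h : (G.deleteEdges (∅ : Set (Sym2 V))).Reachable ↑x ↑y := by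
    rw [deleteEdges_empty]; exact hG.preconnected _ _
  have h2 := (reach_iff x.2 y.2).mp h
  rw [show pA G v c (∅ : Set (Sym2 V)) = ∅ from Set.preimage_empty, deleteEdges_empty] at h2
  simpa using h2

open Classical in
/-- The comparison map for counting components. -/
noncomputable def Fmap (G : SimpleGraph V) (v : V) (A : Set (Sym2 V))
    (x : Σ c : (G.induce ({v}ᶜ : Set V)).ConnectedComponent,
      ((G.induce (pS G v c)).deleteEdges (pA G v c A)).ConnectedComponent) :
    ({(G.deleteEdges A).connectedComponentMk v}ᶜ : Set ((G.deleteEdges A).ConnectedComponent))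
      ⊕ (G.induce ({v}ᶜ : Set V)).ConnectedComponent :=
  if h : x.2.map (incl G v x.1 A) = (G.deleteEdges A).connectedComponentMk v then Sum.inr x.1
  else Sum.inl ⟨x.2.map (incl G v x.1 A), h⟩

lemma Fmap_bijective (G : SimpleGraph V) (v : V) (A : Set (Sym2 V)) :
    Function.Bijective (Fmap G v A) := by
  classical
  constructor
  · rintro ⟨c, C⟩ ⟨c', C'⟩ hF
    obtain ⟨x, rfl⟩ := exists_mk C
    obtain ⟨x', rfl⟩ := exists_mk C'
    unfold Fmap at hF
    simp only [ConnectedComponent.map_mk] at hF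
    by_cases h1 : (G.deleteEdges A).connectedComponentMk (incl G v c A x)
        = (G.deleteEdges A).connectedComponentMk v
    · erw [dif_pos h1] at hF
      by_cases h2 : (G.deleteEdges A).connectedComponentMk (incl G v c' A x')
          = (G.deleteEdges A).connectedComponentMk v
      swap
      · erw [dif_neg h2] at hF; exact absurd hF (by simp)
      · erw [dif_pos h2] at hF
        obtain rfl : c = c' := by simpa using hF
        refine Sigma.ext rfl ?_
        simp only [heq_eq_eq]
        have r1 : ((G.induce (pS G v c)).deleteEdges (pA G v c A)).Reachable x ⟨v, v_mem_pS c⟩ :=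
          by
            have := (ConnectedComponent.eq.mp h1)
            have := (reach_iff (c := c) x.2 (v_mem_pS c)).mp this
            simpa using this
        have r2 : ((G.induce (pS G v c)).deleteEdges (pA G v c A)).Reachable x' ⟨v, v_mem_pS c⟩ :=
          by
            have := (ConnectedComponent.eq.mp h2)
            have := (reach_iff (c := c) x'.2 (v_mem_pS c)).mp this
            simpa using this
        exact ConnectedComponent.sound (r1.trans r2.symm)
    · erw [dif_neg h1] at hF
      by_cases h2 : (G.deleteEdges A).connectedComponentMk (incl G v c' A x')
          = (G.deleteEdges A).connectedComponentMk v
      · erw [dif_pos h2] at hF; exact absurd hF (by simp)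
      · erw [dif_neg h2] at hF
        simp only [Sum.inl.injEq, Subtype.mk.injEq] at hF
        -- x and x' are reachable in G.deleteEdges A
        have hreach : (G.deleteEdges A).Reachable ↑x ↑x' := ConnectedComponent.eq.mp hF
        -- neither x nor x' is v
        have hxv : (x : V) ≠ v := fun h =>
          h1 (congrArg (G.deleteEdges A).connectedComponentMk h)
        have hx'v : (x' : V) ≠ v := fun h =>
          h2 (congrArg (G.deleteEdges A).connectedComponentMk h)
        -- c = c'
        obtain rfl : c = c' := by
          by_contra hcc
          obtain ⟨p⟩ := hreach
          have hvs : v ∈ p.support := by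
            by_contra hns
            obtain ⟨ha, hb, hr⟩ := reach_induce_of_walk p hns
            have e1 := eq_comp_of_mem_pS hxv x.2
            have e2 := eq_comp_of_mem_pS hx'v x'.2
            rw [← e1, ← e2] at hcc
            exact hcc (ConnectedComponent.sound hr)
          -- x reachable to v
          have : (G.deleteEdges A).Reachable ↑x v := ⟨p.takeUntil v hvs⟩
          have := (reach_iff x.2 (v_mem_pS c)).mp this
          exact h1 (ConnectedComponent.sound (reach_down this))
        refine Sigma.ext rfl ?_
        simp only [heq_eq_eq]
        exact ConnectedComponent.sound ((reach_iff x.2 x'.2).mp hreach)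
  · rintro (⟨D, hD⟩ | c)
    · obtain ⟨u, rfl⟩ := exists_mk D
      have huv : u ≠ v := fun h =>
        hD (show _ ∈ ({_} : Set _) from congrArg (G.deleteEdges A).connectedComponentMk h)
      set c := (G.induce ({v}ᶜ : Set V)).connectedComponentMk ⟨u, by simp [huv]⟩ with hc
      have hu : u ∈ pS G v c := mem_pS_of_ne huv c rfl
      refine ⟨⟨c, ((G.induce (pS G v c)).deleteEdges (pA G v c A)).connectedComponentMk
        ⟨u, hu⟩⟩, ?_⟩
      unfold Fmap
      simp only [ConnectedComponent.map_mk]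
      erw [dif_neg]
      · rfl
      · intro h
        exact hD h
    · refine ⟨⟨c, ((G.induce (pS G v c)).deleteEdges (pA G v c A)).connectedComponentMk
        ⟨v, v_mem_pS c⟩⟩, ?_⟩
      unfold Fmap
      simp only [ConnectedComponent.map_mk]
      exact dif_pos rfl

lemma count_lemma [Finite V] (G : SimpleGraph V) (v : V) (A : Set (Sym2 V)) :
    (∑ᶠ c : (G.induce ({v}ᶜ : Set V)).ConnectedComponent,
      numComp ((G.induce (pS G v c)).deleteEdges (pA G v c A))) + 1
    = numComp (G.deleteEdges A)
      + Nat.card (G.induce ({v}ᶜ : Set V)).ConnectedComponent := by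
  classical
  haveI : Fintype V := Fintype.ofFinite V
  haveI : DecidableEq V := Classical.decEq V
  haveI h1 : Fintype ((G.induce ({v}ᶜ : Set V)).ConnectedComponent) := Fintype.ofFinite _
  haveI h2 : ∀ c : (G.induce ({v}ᶜ : Set V)).ConnectedComponent,
      Fintype ((G.induce (pS G v c)).deleteEdges (pA G v c A)).ConnectedComponent :=
    fun c => Fintype.ofFinite _
  haveI h3 : Fintype ((G.deleteEdges A).ConnectedComponent) := Fintype.ofFinite _
  have hcard := Nat.card_eq_of_bijective _ (Fmap_bijective G v A)
  have hsig : Nat.card (Σ c : (G.induce ({v}ᶜ : Set V)).ConnectedComponent,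
      ((G.induce (pS G v c)).deleteEdges (pA G v c A)).ConnectedComponent)
      = ∑ᶠ c : (G.induce ({v}ᶜ : Set V)).ConnectedComponent,
        numComp ((G.induce (pS G v c)).deleteEdges (pA G v c A)) := by
    rw [Nat.card_eq_fintype_card, Fintype.card_sigma, finsum_eq_sum_of_fintype]
    exact Finset.sum_congr rfl fun c _ => (Nat.card_eq_fintype_card).symm
  have hsum : Nat.card
      ((({(G.deleteEdges A).connectedComponentMk v}ᶜ :
          Set ((G.deleteEdges A).ConnectedComponent))) ⊕
        (G.induce ({v}ᶜ : Set V)).ConnectedComponent)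
      = (numComp (G.deleteEdges A) - 1)
        + Nat.card (G.induce ({v}ᶜ : Set V)).ConnectedComponent := by
    rw [Nat.card_sum]
    congr 1
    rw [Nat.card_eq_fintype_card, Fintype.card_compl_set]
    simp [numComp, Nat.card_eq_fintype_card]
  have hpos : 1 ≤ numComp (G.deleteEdges A) := by
    have : Nonempty ((G.deleteEdges A).ConnectedComponent) :=
      ⟨(G.deleteEdges A).connectedComponentMk v⟩
    exact Nat.one_le_iff_ne_zero.mpr (by simpa [numComp, Nat.card_eq_fintype_card]
      using Fintype.card_ne_zero)
  rw [hsig, hsum] at hcard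
  omega

lemma mem_range_iff {s : Set V} {e : Sym2 V} :
    e ∈ Set.range (Sym2.map (Subtype.val : s → V)) ↔ ∀ x ∈ e, x ∈ s := by
  constructor
  · rintro ⟨e', rfl⟩ x hx
    rw [Sym2.mem_map] at hx
    obtain ⟨a, _, rfl⟩ := hx
    exact a.2
  · refine Sym2.ind (fun a b h => ?_) e
    exact ⟨s(⟨a, h a (by simp)⟩, ⟨b, h b (by simp)⟩), by simp [Sym2.map_pair_eq]⟩

lemma unique_c {e : Sym2 V} (he : e ∈ G.edgeSet) :
    ∃! c : (G.induce ({v}ᶜ : Set V)).ConnectedComponent, ∀ x ∈ e, x ∈ pS G v c := by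
  induction e using Sym2.ind with
  | _ a b =>
    rw [mem_edgeSet] at he
    have hab : a ≠ b := he.ne
    by_cases ha : a = v
    · subst ha
      have hb : b ≠ a := hab.symm
      refine ⟨(G.induce ({a}ᶜ : Set V)).connectedComponentMk ⟨b, by simp [hb]⟩,
        fun x hx => ?_, fun c hc => ?_⟩
      · rw [Sym2.mem_iff] at hx
        rcases hx with rfl | rfl
        · exact v_mem_pS _
        · exact mem_pS_of_ne hb _ rfl
      · exact (eq_comp_of_mem_pS hb (hc b (by simp))).symm
    · by_cases hb : b = v
      · subst hb
        refine ⟨(G.induce ({b}ᶜ : Set V)).connectedComponentMk ⟨a, by simp [ha]⟩,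
          fun x hx => ?_, fun c hc => ?_⟩
        · rw [Sym2.mem_iff] at hx
          rcases hx with rfl | rfl
          · exact mem_pS_of_ne ha _ rfl
          · exact v_mem_pS _
        · exact (eq_comp_of_mem_pS ha (hc a (by simp))).symm
      · have hadj : (G.induce ({v}ᶜ : Set V)).Adj ⟨a, by simp [ha]⟩ ⟨b, by simp [hb]⟩ := by
          simpa using he
        refine ⟨(G.induce ({v}ᶜ : Set V)).connectedComponentMk ⟨a, by simp [ha]⟩,
          fun x hx => ?_, fun c hc => ?_⟩
        · rw [Sym2.mem_iff] at hx
          rcases hx with rfl | rfl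
          · exact mem_pS_of_ne ha _ rfl
          · exact mem_pS_of_ne hb _ (ConnectedComponent.sound hadj.symm.reachable)
        · exact (eq_comp_of_mem_pS ha (hc a (by simp))).symm

lemma ncard_lemma [Finite V] (G : SimpleGraph V) (v : V) {A : Set (Sym2 V)}
    (hA : A ⊆ G.edgeSet) :
    (∑ᶠ c : (G.induce ({v}ᶜ : Set V)).ConnectedComponent, (pA G v c A).ncard) = A.ncard := by
  classical
  haveI : Fintype V := Fintype.ofFinite V
  have h1 : ∀ c : (G.induce ({v}ᶜ : Set V)).ConnectedComponent, (pA G v c A).ncard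
      = (A ∩ Set.range (Sym2.map (Subtype.val : pS G v c → V))).ncard := fun c => by
    rw [← Set.ncard_image_of_injective _ (Sym2.map.injective Subtype.val_injective),
      Set.image_preimage_eq_inter_range]
  have hbij : Function.Bijective
      (fun x : (Σ c : (G.induce ({v}ᶜ : Set V)).ConnectedComponent,
        ↥(A ∩ Set.range (Sym2.map (Subtype.val : pS G v c → V)))) => (⟨x.2.1, x.2.2.1⟩ : A)) := by
    constructor
    · rintro ⟨c, e, he⟩ ⟨c', e', he'⟩ hee
      simp only [Subtype.mk.injEq] at hee
      obtain rfl : e = e' := hee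
      obtain rfl : c = c' := by
        obtain ⟨c₀, _, hc₀⟩ := unique_c (G := G) (v := v) (hA he.1)
        rw [hc₀ c (mem_range_iff.mp he.2), hc₀ c' (mem_range_iff.mp he'.2)]
      rfl
    · rintro ⟨e, he⟩
      obtain ⟨c, hc, _⟩ := unique_c (G := G) (v := v) (hA he)
      exact ⟨⟨c, e, he, mem_range_iff.mpr hc⟩, rfl⟩
  have hcard := Nat.card_eq_of_bijective _ hbij
  haveI h2 : Fintype ((G.induce ({v}ᶜ : Set V)).ConnectedComponent) := Fintype.ofFinite _
  rw [Nat.card_eq_fintype_card, Fintype.card_sigma] at hcard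
  rw [finsum_eq_sum_of_fintype]
  calc ∑ c, (pA G v c A).ncard
      = ∑ c : (G.induce ({v}ᶜ : Set V)).ConnectedComponent,
        (A ∩ Set.range (Sym2.map (Subtype.val : pS G v c → V))).ncard :=
        Finset.sum_congr rfl fun c _ => h1 c
    _ = A.ncard := by
        rw [← Nat.card_coe_set_eq, ← hcard]
        exact Finset.sum_congr rfl fun c _ => by
          rw [← Nat.card_coe_set_eq, Nat.card_eq_fintype_card]

lemma pA_subset_edgeSet {A : Set (Sym2 V)} (hA : A ⊆ G.edgeSet)
    (c : (G.induce ({v}ᶜ : Set V)).ConnectedComponent) :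
    pA G v c A ⊆ (G.induce (pS G v c)).edgeSet := by
  intro e he
  induction e using Sym2.ind with
  | _ a b =>
    have h1 : s((a : V), (b : V)) ∈ A := by simpa [Sym2.map_pair_eq] using he
    have h2 := hA h1
    rw [mem_edgeSet] at h2 ⊢
    exact h2

lemma map_mem_edgeSet {s : Set V} {e : Sym2 s} (h : e ∈ (G.induce s).edgeSet) :
    e.map Subtype.val ∈ G.edgeSet := by
  induction e using Sym2.ind with
  | _ a b =>
    rw [mem_edgeSet] at h
    rw [Sym2.map_pair_eq, mem_edgeSet]
    exact h

lemma yVal_lemma [Finite V] (G : SimpleGraph V) (v : V) {A : Set (Sym2 V)}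
    (hA : A ⊆ G.edgeSet) :
    yVal G A = (∑ᶠ c : (G.induce ({v}ᶜ : Set V)).ConnectedComponent,
        yVal (G.induce (pS G v c)) (pA G v c A))
      - (Nat.card (G.induce ({v}ᶜ : Set V)).ConnectedComponent : ℤ) + 1 := by
  classical
  haveI : Fintype ((G.induce ({v}ᶜ : Set V)).ConnectedComponent) := Fintype.ofFinite _
  have hc := count_lemma G v A
  have hn := ncard_lemma G v hA
  rw [finsum_eq_sum_of_fintype] at hc hn ⊢
  have key : (∑ c : (G.induce ({v}ᶜ : Set V)).ConnectedComponent,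
        yVal (G.induce (pS G v c)) (pA G v c A))
      = 2 * ((∑ c : (G.induce ({v}ᶜ : Set V)).ConnectedComponent,
          numComp ((G.induce (pS G v c)).deleteEdges (pA G v c A)) : ℕ) : ℤ)
        - ((∑ c : (G.induce ({v}ᶜ : Set V)).ConnectedComponent, (pA G v c A).ncard : ℕ) : ℤ)
        - (Nat.card ((G.induce ({v}ᶜ : Set V)).ConnectedComponent) : ℤ) := by
    unfold yVal
    push_cast
    rw [Finset.sum_sub_distrib, Finset.sum_sub_distrib, Finset.mul_sum]
    simp [Finset.card_univ, Nat.card_eq_fintype_card]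
  rw [key, hn]
  unfold yVal
  omega

lemma Yset_finite [Finite V] (G : SimpleGraph V) :
    {y : ℤ | ∃ A ⊆ G.edgeSet, yVal G A = y}.Finite := by
  have hsub : {y : ℤ | ∃ A ⊆ G.edgeSet, yVal G A = y} ⊆ (yVal G) '' Set.univ := by
    rintro y ⟨A, _, rfl⟩
    exact ⟨A, trivial, rfl⟩
  exact ((Set.finite_univ (α := Set (Sym2 V))).image _).subset hsub

lemma yMax_mem [Finite V] (G : SimpleGraph V) : ∃ A ⊆ G.edgeSet, yVal G A = yMax G := by
  have hne : {y : ℤ | ∃ A ⊆ G.edgeSet, yVal G A = y}.Nonempty :=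
    ⟨yVal G ∅, ∅, by simp, rfl⟩
  exact Set.Nonempty.csSup_mem hne (Yset_finite G)

lemma le_yMax [Finite V] (G : SimpleGraph V) {A : Set (Sym2 V)} (hA : A ⊆ G.edgeSet) :
    yVal G A ≤ yMax G :=
  le_csSup (Yset_finite G).bddAbove ⟨A, hA, rfl⟩

lemma pA_union (G : SimpleGraph V) (v : V)
    (B : ∀ c : (G.induce ({v}ᶜ : Set V)).ConnectedComponent, Set (Sym2 (pS G v c)))
    (hB : ∀ c, B c ⊆ (G.induce (pS G v c)).edgeSet) :
    (⋃ c, Sym2.map Subtype.val '' B c) ⊆ G.edgeSet ∧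
      ∀ c, pA G v c (⋃ c', Sym2.map Subtype.val '' B c') = B c := by
  constructor
  · rintro e he
    rw [Set.mem_iUnion] at he
    obtain ⟨c, e', he', rfl⟩ := he
    exact map_mem_edgeSet (hB c he')
  · intro c
    ext e
    constructor
    · intro he
      have he' : Sym2.map Subtype.val e ∈ ⋃ c', Sym2.map Subtype.val '' B c' := he
      rw [Set.mem_iUnion] at he'
      obtain ⟨c', e', he'', heq⟩ := he'
      have hedge : Sym2.map Subtype.val e ∈ G.edgeSet := by
        rw [← heq]; exact map_mem_edgeSet (hB c' he'')
      obtain ⟨c₀, _, hc₀⟩ := unique_c (G := G) (v := v) hedge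
      have hmem : ∀ x ∈ Sym2.map Subtype.val e, x ∈ pS G v c :=
        mem_range_iff.mp ⟨e, rfl⟩
      have hmem' : ∀ x ∈ Sym2.map Subtype.val e, x ∈ pS G v c' :=
        mem_range_iff.mp ⟨e', heq⟩
      obtain rfl : c = c' := by rw [hc₀ c hmem, hc₀ c' hmem']
      obtain rfl : e' = e := Sym2.map.injective Subtype.val_injective heq
      exact he''
    · intro he
      show Sym2.map Subtype.val e ∈ ⋃ c', Sym2.map Subtype.val '' B c'
      rw [Set.mem_iUnion]
      exact ⟨c, e, he, rfl⟩

end YAuxProof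

open YAuxProof in
/-- If `v` is a cut vertex of a connected finite simple graph `G`, `H₁, …, H_k` (`k ≥ 2`) are
the connected components of `G - v`, and `G_i` is the subgraph of `G` induced by
`V(H_i) ∪ {v}`, then each `G_i` is connected and `y_G = (Σ_i y_{G_i}) - k + 1`. -/
theorem yMax_eq_of_cutVertex {V : Type*} [Finite V]
    (G : SimpleGraph V) (hG : G.Connected) (v : V)
    (hcut : ¬ (G.induce ({v}ᶜ : Set V)).Connected)
    (hk : 2 ≤ Nat.card (G.induce ({v}ᶜ : Set V)).ConnectedComponent) :
    (∀ c : (G.induce ({v}ᶜ : Set V)).ConnectedComponent,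
        (G.induce ((Subtype.val '' c.supp) ∪ {v})).Connected) ∧
    yMax G = (∑ᶠ c : (G.induce ({v}ᶜ : Set V)).ConnectedComponent,
        yMax (G.induce ((Subtype.val '' c.supp) ∪ {v})))
      - (Nat.card (G.induce ({v}ᶜ : Set V)).ConnectedComponent : ℤ) + 1 := by
  classical
  refine ⟨fun c => pS_connected hG c, ?_⟩
  show yMax G = (∑ᶠ c : (G.induce ({v}ᶜ : Set V)).ConnectedComponent,
        yMax (G.induce (pS G v c)))
      - (Nat.card (G.induce ({v}ᶜ : Set V)).ConnectedComponent : ℤ) + 1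
  haveI : Fintype ((G.induce ({v}ᶜ : Set V)).ConnectedComponent) := Fintype.ofFinite _
  apply le_antisymm
  · obtain ⟨A, hA, hval⟩ := yMax_mem G
    rw [← hval, yVal_lemma G v hA]
    have hle : ∀ c : (G.induce ({v}ᶜ : Set V)).ConnectedComponent,
        yVal (G.induce (pS G v c)) (pA G v c A) ≤ yMax (G.induce (pS G v c)) :=
      fun c => le_yMax _ (pA_subset_edgeSet hA c)
    have hsum : (∑ᶠ c : (G.induce ({v}ᶜ : Set V)).ConnectedComponent,
          yVal (G.induce (pS G v c)) (pA G v c A))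
        ≤ ∑ᶠ c : (G.induce ({v}ᶜ : Set V)).ConnectedComponent, yMax (G.induce (pS G v c)) := by
      rw [finsum_eq_sum_of_fintype, finsum_eq_sum_of_fintype]
      exact Finset.sum_le_sum fun c _ => hle c
    omega
  · choose B hB1 hB2 using fun c : (G.induce ({v}ᶜ : Set V)).ConnectedComponent =>
      yMax_mem (G.induce (pS G v c))
    obtain ⟨hAsub, hpA⟩ := pA_union G v B hB1
    have hval := yVal_lemma G v hAsub
    have heq : (∑ᶠ c : (G.induce ({v}ᶜ : Set V)).ConnectedComponent,
          yVal (G.induce (pS G v c)) (pA G v c (⋃ c', Sym2.map Subtype.val '' B c')))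
        = ∑ᶠ c : (G.induce ({v}ᶜ : Set V)).ConnectedComponent, yMax (G.induce (pS G v c)) :=
      finsum_congr fun c => by rw [hpA c, hB2 c]
    rw [heq] at hval
    rw [← hval]
    exact le_yMax G hAsub
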